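/- Let d = 3, so L² = 6. Let C = aL + Σ_{i=1}^8 b_iN_i with a ∈ ℤ, a ≥ 1, b_i ∈ (1/2)ℤ, b_i ≤ 0 (intersection form: L² = 6, L·N_i = 0, N_i·N_j = -2δ_{ij}). If C·(L - N̂) ≤ 0 with N̂ = (N_1+...+N_8)/2, then C² < -2. -/
import Mathlib

/-- Ampleness computation for `L - N̂` when `L² = 6`: if `C = aL + Σ bᵢNᵢ`
    with `a ∈ ℤ`, `a ≥ 1`, `bᵢ ∈ ½ℤ`, `bᵢ ≤ 0` and `C·(L - N̂) ≤ 0`,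
    then `C² < -2`. -/
theorem ample_L_minus_Nhat_d3
    (a : ℤ) (ha : 1 ≤ a) (b : Fin 8 → ℚ)
    (hb2 : ∀ i, ∃ m : ℤ, b i = (m : ℚ) / 2) (hb : ∀ i, b i ≤ 0)
    (hneg : 6 * (a : ℚ) + ∑ i, b i ≤ 0) :
    6 * (a : ℚ) ^ 2 - 2 * ∑ i, (b i) ^ 2 < -2 := by
  have hcs : (∑ i, b i) ^ 2 ≤ (Finset.univ.card : ℚ) * ∑ i, (b i) ^ 2 :=
    sq_sum_le_card_mul_sum_sq
  simp only [Finset.card_univ, Fintype.card_fin] at hcs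
  have haq : (1 : ℚ) ≤ (a : ℚ) := by exact_mod_cast ha
  have h1 : (0:ℚ) ≤ -(∑ i, b i) - 6 * a := by linarith
  have h2 : (0:ℚ) ≤ -(∑ i, b i) + 6 * a := by linarith
  push_cast at hcs
  nlinarith [hcs, haq, mul_nonneg h1 h2, sq_nonneg ((a:ℚ) - 1), sq_nonneg (∑ i, b i)]
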